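/- arXiv:1701.06423 — 3 statements merged into one kernel-verified Lean document; each statement's English description precedes it below -/
import Mathlib

section
/- Fix integers k, p, q, K with max{0, p+q−K} ≤ k ≤ min{p,q}. Define S(k) as the set of permutations σ of {1,…,K} such that the cardinality of σ({p−k+1,…,p−k+q}) ∩ {1,…,p} equals k. Then |S(k)| = C(q,k)·C(p,k)·k!·((K−q)!·(K−p)!)/((K−(q+p−k))!). -/
open Finset

section aux
variable {n : ℕ}

lemma stc_pos {α} {p q : α → Prop} [DecidablePred p] [DecidablePred q]
    (e : { x // p x } ≃ { x // q x }) (f : { x // ¬p x } ≃ { x // ¬q x }) (a : α) (h : p a) :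
    Equiv.subtypeCongr e f a = ↑(e ⟨a, h⟩) := by
  simp [Equiv.subtypeCongr, h]

lemma stc_neg {α} {p q : α → Prop} [DecidablePred p] [DecidablePred q]
    (e : { x // p x } ≃ { x // q x }) (f : { x // ¬p x } ≃ { x // ¬q x }) (a : α) (h : ¬ p a) :
    Equiv.subtypeCongr e f a = ↑(f ⟨a, h⟩) := by
  simp [Equiv.subtypeCongr, h]

lemma image_eq_iff (A C : Finset (Fin n)) (σ : Equiv.Perm (Fin n)) :
    A.image ⇑σ = C ↔ ∀ x, x ∈ A ↔ σ x ∈ C := by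
  constructor
  · intro h x
    constructor
    · intro hx; rw [← h]; exact Finset.mem_image_of_mem _ hx
    · intro hx
      rw [← h] at hx
      obtain ⟨a, ha, hax⟩ := Finset.mem_image.mp hx
      rwa [← σ.injective hax]
  · intro h
    ext c
    simp only [Finset.mem_image]
    constructor
    · rintro ⟨a, ha, rfl⟩; exact (h a).mp ha
    · intro hc
      exact ⟨σ.symm c, (h _).mpr (by simpa using hc), σ.apply_symm_apply c⟩

lemma perm_image_card (A C : Finset (Fin n)) (h : A.card = C.card) :
    ((Finset.univ : Finset (Equiv.Perm (Fin n))).filter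
        (fun σ : Equiv.Perm (Fin n) => A.image ⇑σ = C)).card
      = A.card.factorial * (n - A.card).factorial := by
  classical
  rw [← Fintype.card_subtype]
  have E : {σ : Equiv.Perm (Fin n) // A.image ⇑σ = C} ≃
      ({x : Fin n // x ∈ A} ≃ {x : Fin n // x ∈ C}) ×
        ({x : Fin n // ¬ x ∈ A} ≃ {x : Fin n // ¬ x ∈ C}) :=
    { toFun := fun σ =>
        ((σ.1.subtypeEquiv ((image_eq_iff A C σ.1).mp σ.2)),
         (σ.1.subtypeEquiv (fun x => not_congr ((image_eq_iff A C σ.1).mp σ.2 x))))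
      invFun := fun ef => ⟨Equiv.subtypeCongr ef.1 ef.2, by
        rw [image_eq_iff]
        intro x
        by_cases hx : x ∈ A
        · rw [stc_pos ef.1 ef.2 x hx]
          exact ⟨fun _ => (ef.1 ⟨x, hx⟩).2, fun _ => hx⟩
        · rw [stc_neg ef.1 ef.2 x hx]
          exact ⟨fun h' => absurd h' hx, fun h' => absurd h' (ef.2 ⟨x, hx⟩).2⟩⟩
      left_inv := by
        rintro ⟨σ, hσ⟩
        ext x
        by_cases hx : x ∈ A
        · rw [stc_pos _ _ x hx]; simp
        · rw [stc_neg _ _ x hx]; simp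
      right_inv := by
        rintro ⟨e, f⟩
        refine Prod.ext ?_ ?_ <;> dsimp only
        · ext a
          simp only [Equiv.subtypeEquiv_apply]
          rw [stc_pos e f a a.2]
        · ext a
          simp only [Equiv.subtypeEquiv_apply]
          rw [stc_neg e f a a.2] }
  have hc1 : Fintype.card {x : Fin n // x ∈ A} = A.card := Fintype.card_coe A
  have hc2 : Fintype.card {x : Fin n // x ∈ C} = C.card := Fintype.card_coe C
  rw [Fintype.card_congr E, Fintype.card_prod,
      Fintype.card_equiv (Fintype.equivOfCardEq (by rw [hc1, hc2, h])),
      Fintype.card_equiv (Fintype.equivOfCardEq (by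
        rw [Fintype.card_subtype_compl, Fintype.card_subtype_compl, hc1, hc2, h])),
      hc1, Fintype.card_subtype_compl, hc1, Fintype.card_fin]

lemma count_subsets {n : ℕ} (B : Finset (Fin n)) (q k : ℕ) (hk : k ≤ q) :
    (((Finset.univ : Finset (Fin n)).powersetCard q).filter
        (fun C => (C ∩ B).card = k)).card
      = B.card.choose k * (n - B.card).choose (q - k) := by
  classical
  have hcompl : (Bᶜ : Finset (Fin n)).card = n - B.card := by
    rw [Finset.card_compl, Fintype.card_fin]
  rw [← hcompl]
  rw [← Finset.card_powersetCard, ← Finset.card_powersetCard, ← Finset.card_product]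
  apply Finset.card_nbij' (fun C => (C ∩ B, C \ B)) (fun P => P.1 ∪ P.2)
  · intro C hC
    simp only [Finset.mem_coe, Finset.mem_filter, Finset.mem_powersetCard_univ] at hC
    obtain ⟨hq, hkk⟩ := hC
    simp only [Finset.mem_coe, Finset.mem_product, Finset.mem_powersetCard]
    refine ⟨⟨Finset.inter_subset_right, hkk⟩, ?_, ?_⟩
    · intro x hx
      simp only [Finset.mem_sdiff] at hx
      simp [hx.2]
    · have h1 : C ∩ B ⊆ C := Finset.inter_subset_left
      have h2 : C \ (C ∩ B) = C \ B := by ext x; simp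
      rw [← h2, Finset.card_sdiff_of_subset h1]
      omega
  · intro P hP
    simp only [Finset.mem_coe, Finset.mem_product, Finset.mem_powersetCard] at hP
    obtain ⟨⟨hS, hSk⟩, hT, hTk⟩ := hP
    have hdisj : Disjoint P.1 P.2 := by
      rw [Finset.disjoint_left]
      intro a ha hat
      exact (Finset.mem_compl.mp (hT hat)) (hS ha)
    simp only [Finset.mem_coe, Finset.mem_filter, Finset.mem_powersetCard_univ]
    constructor
    · rw [Finset.card_union_of_disjoint hdisj, hSk, hTk]; omega
    · have : (P.1 ∪ P.2) ∩ B = P.1 := by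
        ext x
        simp only [Finset.mem_inter, Finset.mem_union]
        constructor
        · rintro ⟨hx1 | hx2, hxB⟩
          · exact hx1
          · exact absurd hxB (Finset.mem_compl.mp (hT hx2))
        · intro hx; exact ⟨Or.inl hx, hS hx⟩
      rw [this, hSk]
  · intro C hC
    simp only
    ext x; simp; tauto
  · intro P hP
    simp only [Finset.mem_coe, Finset.mem_product, Finset.mem_powersetCard] at hP
    obtain ⟨⟨hS, hSk⟩, hT, hTk⟩ := hP
    have h1 : (P.1 ∪ P.2) ∩ B = P.1 := by
      ext x
      simp only [Finset.mem_inter, Finset.mem_union]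
      constructor
      · rintro ⟨hx1 | hx2, hxB⟩
        · exact hx1
        · exact absurd hxB (Finset.mem_compl.mp (hT hx2))
      · intro hx; exact ⟨Or.inl hx, hS hx⟩
    have h2 : (P.1 ∪ P.2) \ B = P.2 := by
      ext x
      simp only [Finset.mem_sdiff, Finset.mem_union]
      constructor
      · rintro ⟨hx1 | hx2, hxB⟩
        · exact absurd (hS hx1) hxB
        · exact hx2
      · intro hx; exact ⟨Or.inr hx, Finset.mem_compl.mp (hT hx)⟩
    rw [Prod.ext_iff]
    exact ⟨h1, h2⟩

/-- Cardinality of the set `S(k)` of permutations `σ` of `{1,…,K}` such that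
`σ({p−k+1,…,p−k+q}) ∩ {1,…,p}` has exactly `k` elements (indices written `0`-based,
so `{1,…,p}` becomes `{i : i < p}` and `{p−k+1,…,p−k+q}` becomes `{i : p−k ≤ i < p−k+q}`):
`|S(k)| = C(q,k)·C(p,k)·k!·(K−q)!·(K−p)!/(K−(q+p−k))!`. -/
theorem card_permutation_intersection_class (k p q K : ℕ)
    (hpK : p ≤ K) (hqK : q ≤ K) (hlow : p + q - K ≤ k) (hkp : k ≤ p) (hkq : k ≤ q) :
    ((Finset.univ : Finset (Equiv.Perm (Fin K))).filter (fun σ : Equiv.Perm (Fin K) =>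
        (((Finset.univ.filter (fun i : Fin K => p - k ≤ (i : ℕ) ∧ (i : ℕ) < p - k + q)).image
              (⇑σ)) ∩ Finset.univ.filter (fun i : Fin K => (i : ℕ) < p)).card = k)).card
      = q.choose k * p.choose k * k.factorial *
          ((K - q).factorial * ((K - p).factorial / (K - (q + p - k)).factorial)) := by
  classical
  set A : Finset (Fin K) :=
    Finset.univ.filter (fun i : Fin K => p - k ≤ (i : ℕ) ∧ (i : ℕ) < p - k + q) with hAdef
  set B : Finset (Fin K) := Finset.univ.filter (fun i : Fin K => (i : ℕ) < p) with hBdef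
  have hAq : A.card = q := by
    rw [← Finset.card_image_of_injective A Fin.val_injective]
    have himg : A.image Fin.val = Finset.Ico (p - k) (p - k + q) := by
      ext m
      simp only [hAdef, Finset.mem_image, Finset.mem_filter, Finset.mem_univ, true_and,
        Finset.mem_Ico]
      constructor
      · rintro ⟨i, hi, rfl⟩; exact hi
      · intro hm
        exact ⟨⟨m, by omega⟩, by simpa using hm, rfl⟩
    rw [himg, Nat.card_Ico]; omega
  have hBp : B.card = p := by
    rw [← Finset.card_image_of_injective B Fin.val_injective]
    have himg : B.image Fin.val = Finset.range p := by
      ext m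
      simp only [hBdef, Finset.mem_image, Finset.mem_filter, Finset.mem_univ, true_and,
        Finset.mem_range]
      constructor
      · rintro ⟨i, hi, rfl⟩; exact hi
      · intro hm
        exact ⟨⟨m, by omega⟩, by simpa using hm, rfl⟩
    rw [himg, Finset.card_range]
  set t := ((Finset.univ : Finset (Fin K)).powersetCard q).filter
    (fun C : Finset (Fin K) => (C ∩ B).card = k) with htdef
  have step1 : ((Finset.univ : Finset (Equiv.Perm (Fin K))).filter
        (fun σ : Equiv.Perm (Fin K) => ((A.image ⇑σ) ∩ B).card = k)).card
      = ∑ C ∈ t, ((Finset.univ : Finset (Equiv.Perm (Fin K))).filter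
          (fun σ : Equiv.Perm (Fin K) => A.image ⇑σ = C)).card := by
    rw [Finset.card_eq_sum_card_fiberwise
      (f := fun σ : Equiv.Perm (Fin K) => A.image ⇑σ) (t := t) ?_]
    · apply Finset.sum_congr rfl
      intro C hC
      congr 1
      ext σ
      simp only [Finset.mem_filter, Finset.mem_univ, true_and]
      constructor
      · rintro ⟨_, h2⟩; exact h2
      · intro h2
        refine ⟨?_, h2⟩
        rw [h2]
        exact (Finset.mem_filter.mp hC).2
    · intro σ hσ
      simp only [Finset.mem_coe, Finset.mem_filter, Finset.mem_univ, true_and] at hσ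
      refine Finset.mem_filter.mpr ⟨Finset.mem_powersetCard_univ.mpr ?_, hσ⟩
      rw [Finset.card_image_of_injective _ σ.injective, hAq]
  rw [step1]
  have step2 : ∀ C ∈ t, ((Finset.univ : Finset (Equiv.Perm (Fin K))).filter
      (fun σ : Equiv.Perm (Fin K) => A.image ⇑σ = C)).card
        = q.factorial * (K - q).factorial := by
    intro C hC
    have hCq : C.card = q :=
      Finset.mem_powersetCard_univ.mp (Finset.mem_filter.mp hC).1
    rw [perm_image_card A C (by rw [hAq, hCq]), hAq]
  rw [Finset.sum_congr rfl step2, Finset.sum_const, smul_eq_mul]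
  have htcard : t.card = p.choose k * (K - p).choose (q - k) := by
    rw [htdef, count_subsets B q k hkq, hBp]
  rw [htcard]
  have e1 : K - (q + p - k) = (K - p) - (q - k) := by omega
  have hqk2 : q - k ≤ K - p := by omega
  have e2 : (K - p).factorial / ((K - p) - (q - k)).factorial
      = (K - p).choose (q - k) * (q - k).factorial := by
    rw [← Nat.choose_mul_factorial_mul_factorial hqk2,
      Nat.mul_div_cancel _ (Nat.factorial_pos _)]
  have e3 : q.factorial = q.choose k * k.factorial * (q - k).factorial :=
    (Nat.choose_mul_factorial_mul_factorial hkq).symm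
  rw [e1, e2, e3]
  ring
end aux
end

section
/- Fix integers k, p, q, K with max{0, p+q−K} ≤ k ≤ min{p,q}, and let σ be a permutation of {1,…,K} such that |σ({p−k+1,…,p−k+q}) ∩ {1,…,p}| = k. Then σ can be factored as σ = σ⁽¹⁾σ⁽²⁾σ⁽³⁾σ⁽⁴⁾ where σ⁽¹⁾ is a permutation supported on {1,…,p}, σ⁽²⁾ on {p+1,…,K}, σ⁽³⁾ on {p−k+1,…,p−k+q}, and σ⁽⁴⁾ on {1,…,K}∖{p−k+1,…,p−k+q}. -/
open Equiv Finset

private lemma perm_exists_of_card_eq {β : Type*} [Fintype β] [DecidableEq β]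
    (PS PT : β → Prop) [DecidablePred PS] [DecidablePred PT]
    (h : Fintype.card {x // PS x} = Fintype.card {x // PT x}) :
    ∃ π : Equiv.Perm β, ∀ x, PT (π x) ↔ PS x := by
  have h' : Fintype.card {x // ¬ PS x} = Fintype.card {x // ¬ PT x} := by
    rw [Fintype.card_subtype_compl, Fintype.card_subtype_compl, h]
  let f := Fintype.equivOfCardEq h
  let g := Fintype.equivOfCardEq h'
  refine ⟨(Equiv.sumCompl PS).symm.trans ((f.sumCongr g).trans (Equiv.sumCompl PT)), ?_⟩
  intro x
  by_cases hx : PS x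
  · simp only [Equiv.trans_apply, Equiv.sumCompl_symm_apply_of_pos hx,
      Equiv.sumCongr_apply, Sum.map_inl, Equiv.sumCompl_apply_inl]
    exact iff_of_true (f ⟨x, hx⟩).2 hx
  · simp only [Equiv.trans_apply, Equiv.sumCompl_symm_apply_of_neg hx,
      Equiv.sumCongr_apply, Sum.map_inr, Equiv.sumCompl_apply_inr]
    exact iff_of_false (g ⟨x, hx⟩).2 hx

private lemma perm_glue {α : Type*} [Fintype α] [DecidableEq α] (PB PS PT : α → Prop)
    [DecidablePred PB] [DecidablePred PS] [DecidablePred PT]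
    (h1 : Fintype.card {x // PB x ∧ PS x} = Fintype.card {x // PB x ∧ PT x})
    (h2 : Fintype.card {x // ¬ PB x ∧ PS x} = Fintype.card {x // ¬ PB x ∧ PT x}) :
    ∃ ρ : Equiv.Perm α, ∀ x, (PB (ρ x) ↔ PB x) ∧ (PT (ρ x) ↔ PS x) := by
  have c1 : Fintype.card {y : {x // PB x} // PS ↑y} = Fintype.card {y : {x // PB x} // PT ↑y} := by
    rw [Fintype.card_congr (Equiv.subtypeSubtypeEquivSubtypeInter PB PS),
        Fintype.card_congr (Equiv.subtypeSubtypeEquivSubtypeInter PB PT)]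
    exact h1
  have c2 : Fintype.card {y : {x // ¬ PB x} // PS ↑y}
      = Fintype.card {y : {x // ¬ PB x} // PT ↑y} := by
    rw [Fintype.card_congr (Equiv.subtypeSubtypeEquivSubtypeInter (fun x => ¬ PB x) PS),
        Fintype.card_congr (Equiv.subtypeSubtypeEquivSubtypeInter (fun x => ¬ PB x) PT)]
    exact h2
  obtain ⟨ρ₁, hρ₁⟩ := perm_exists_of_card_eq (fun y : {x // PB x} => PS ↑y)
    (fun y : {x // PB x} => PT ↑y) c1
  obtain ⟨ρ₂, hρ₂⟩ := perm_exists_of_card_eq (fun y : {x // ¬ PB x} => PS ↑y)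
    (fun y : {x // ¬ PB x} => PT ↑y) c2
  refine ⟨Equiv.Perm.subtypeCongr ρ₁ ρ₂, fun x => ?_⟩
  by_cases hx : PB x
  · rw [Equiv.Perm.subtypeCongr.left_apply _ _ hx]
    exact ⟨iff_of_true (ρ₁ ⟨x, hx⟩).2 hx, hρ₁ ⟨x, hx⟩⟩
  · rw [Equiv.Perm.subtypeCongr.right_apply _ _ hx]
    exact ⟨iff_of_false (ρ₂ ⟨x, hx⟩).2 hx, hρ₂ ⟨x, hx⟩⟩

private lemma perm_decomp {α : Type*} [Fintype α] [DecidableEq α] (P : α → Prop) [DecidablePred P]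
    (τ : Equiv.Perm α) (h : ∀ x, P (τ x) ↔ P x) :
    ∃ τ₁ τ₂ : Equiv.Perm α, (∀ x, ¬ P x → τ₁ x = x) ∧ (∀ x, P x → τ₂ x = x) ∧ τ = τ₁ * τ₂ := by
  have h1 : ∀ x, P (τ x) ↔ P x := h
  have h2 : ∀ x, ¬ P (τ x) ↔ ¬ P x := fun x => not_congr (h1 x)
  refine ⟨Equiv.Perm.ofSubtype (τ.subtypePerm h1),
    Equiv.Perm.ofSubtype ((τ.subtypePerm h2 : Equiv.Perm {x // ¬ P x})),
    fun x hx => Equiv.Perm.ofSubtype_subtypePerm_of_not_mem h1 hx,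
    fun x hx => Equiv.Perm.ofSubtype_subtypePerm_of_not_mem (p := fun a => ¬ P a) h2
      (not_not_intro hx), ?_⟩
  ext x
  rw [Equiv.Perm.mul_apply]
  by_cases hx : P x
  · rw [Equiv.Perm.ofSubtype_subtypePerm_of_not_mem (p := fun a => ¬ P a) h2 (not_not_intro hx),
      Equiv.Perm.ofSubtype_subtypePerm_of_mem h1 hx]
  · rw [Equiv.Perm.ofSubtype_subtypePerm_of_mem (p := fun a => ¬ P a) h2 hx,
      Equiv.Perm.ofSubtype_subtypePerm_of_not_mem h1 ((h2 x).mpr hx)]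

private lemma card_filter_Ico {K : ℕ} (a b : ℕ) (hb : b ≤ K) :
    (Finset.univ.filter fun i : Fin K => a ≤ (i : ℕ) ∧ (i : ℕ) < b).card = b - a := by
  have h : ∀ m ∈ Finset.Ico a b, m < K := fun m hm =>
    lt_of_lt_of_le (Finset.mem_Ico.mp hm).2 hb
  have : (Finset.univ.filter fun i : Fin K => a ≤ (i : ℕ) ∧ (i : ℕ) < b)
      = (Finset.Ico a b).attachFin h := by
    ext i
    simp [Finset.mem_attachFin, Finset.mem_Ico]
  rw [this, Finset.card_attachFin, Nat.card_Ico]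

/-- Factorization of a permutation `σ` of `{1,…,K}` (written `0`-based on `Fin K`) with
`|σ({p−k+1,…,p−k+q}) ∩ {1,…,p}| = k` as `σ = σ¹σ²σ³σ⁴` with `σ¹` supported on `{1,…,p}`,
`σ²` on `{p+1,…,K}`, `σ³` on `{p−k+1,…,p−k+q}` and `σ⁴` on the complement of the latter. -/
theorem permutation_factorization (k p q K : ℕ)
    (hpK : p ≤ K) (hqK : q ≤ K) (hlow : p + q - K ≤ k) (hkp : k ≤ p) (hkq : k ≤ q)
    (σ : Equiv.Perm (Fin K))
    (hσ : (((Finset.univ.filter (fun i : Fin K => p - k ≤ (i : ℕ) ∧ (i : ℕ) < p - k + q)).image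
          (⇑σ)) ∩ Finset.univ.filter (fun i : Fin K => (i : ℕ) < p)).card = k) :
    ∃ σ₁ σ₂ σ₃ σ₄ : Equiv.Perm (Fin K),
      (∀ i : Fin K, ¬ (i : ℕ) < p → σ₁ i = i) ∧
      (∀ i : Fin K, (i : ℕ) < p → σ₂ i = i) ∧
      (∀ i : Fin K, ¬ (p - k ≤ (i : ℕ) ∧ (i : ℕ) < p - k + q) → σ₃ i = i) ∧
      (∀ i : Fin K, (p - k ≤ (i : ℕ) ∧ (i : ℕ) < p - k + q) → σ₄ i = i) ∧
      σ = σ₁ * σ₂ * σ₃ * σ₄ := by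
  have hpkq : p - k + q ≤ K := by omega
  set PA : Fin K → Prop := fun i => (i : ℕ) < p with hPA
  set PB : Fin K → Prop := fun i => p - k ≤ (i : ℕ) ∧ (i : ℕ) < p - k + q with hPB
  set S : Fin K → Prop := fun i => ((σ i : ℕ)) < p with hS
  -- basic cardinalities
  have cA : (Finset.univ.filter PA).card = p := by
    have h0 : (Finset.univ.filter PA) =
        (Finset.univ.filter fun i : Fin K => 0 ≤ (i : ℕ) ∧ (i : ℕ) < p) := by
      ext i; simp [hPA]
    rw [h0, card_filter_Ico 0 p hpK, Nat.sub_zero]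
  -- |B ∩ A| = k
  have cBA : (Finset.univ.filter fun i => PB i ∧ PA i).card = k := by
    have h0 : (Finset.univ.filter fun i => PB i ∧ PA i) =
        (Finset.univ.filter fun i : Fin K => p - k ≤ (i : ℕ) ∧ (i : ℕ) < p) := by
      ext i
      simp only [Finset.mem_filter, Finset.mem_univ, true_and, hPA, hPB]
      exact ⟨fun h => ⟨h.1.1, h.2⟩, fun h => ⟨⟨h.1, by omega⟩, h.2⟩⟩
    rw [h0, card_filter_Ico _ _ hpK]
    omega
  -- |B ∩ σ⁻¹A| = k
  have cBS : (Finset.univ.filter fun i => PB i ∧ S i).card = k := by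
    have himg : (Finset.univ.filter fun i => PB i ∧ S i).image ⇑σ =
        (Finset.univ.filter PB).image ⇑σ ∩ Finset.univ.filter PA := by
      ext y
      simp only [Finset.mem_image, Finset.mem_inter, Finset.mem_filter, Finset.mem_univ, true_and]
      constructor
      · rintro ⟨x, ⟨hB, hA⟩, rfl⟩; exact ⟨⟨x, hB, rfl⟩, hA⟩
      · rintro ⟨⟨x, hB, rfl⟩, hA⟩; exact ⟨x, ⟨hB, hA⟩, rfl⟩
    have := Finset.card_image_of_injective
      (Finset.univ.filter fun i => PB i ∧ S i) σ.injective
    rw [himg] at this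
    rw [← this, hσ]
  -- |σ⁻¹A| = p
  have cS : (Finset.univ.filter S).card = p := by
    have himg : (Finset.univ.filter S).image ⇑σ = Finset.univ.filter PA := by
      ext y
      simp only [Finset.mem_image, Finset.mem_filter, Finset.mem_univ, true_and]
      constructor
      · rintro ⟨x, hx, rfl⟩; exact hx
      · intro hy
        exact ⟨σ⁻¹ y, by simp only [hS]; rw [Equiv.Perm.coe_inv, Equiv.apply_symm_apply]; exact hy, by simp⟩
    have := Finset.card_image_of_injective (Finset.univ.filter S) σ.injective
    rw [himg] at this
    rw [← this, cA]
  -- complements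
  have cBS' : (Finset.univ.filter fun i => ¬ PB i ∧ S i).card = p - k := by
    have hsplit := Finset.card_filter_add_card_filter_not
      (s := Finset.univ.filter S) (p := PB)
    rw [Finset.filter_filter, Finset.filter_filter, cS] at hsplit
    have e1 : (Finset.univ.filter fun i => S i ∧ PB i) =
        (Finset.univ.filter fun i => PB i ∧ S i) := by ext i; simp [and_comm]
    have e2 : (Finset.univ.filter fun i => S i ∧ ¬ PB i) =
        (Finset.univ.filter fun i => ¬ PB i ∧ S i) := by ext i; simp [and_comm]
    rw [e1, e2, cBS] at hsplit
    omega
  have cBA' : (Finset.univ.filter fun i => ¬ PB i ∧ PA i).card = p - k := by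
    have hsplit := Finset.card_filter_add_card_filter_not
      (s := Finset.univ.filter PA) (p := PB)
    rw [Finset.filter_filter, Finset.filter_filter, cA] at hsplit
    have e1 : (Finset.univ.filter fun i => PA i ∧ PB i) =
        (Finset.univ.filter fun i => PB i ∧ PA i) := by ext i; simp [and_comm]
    have e2 : (Finset.univ.filter fun i => PA i ∧ ¬ PB i) =
        (Finset.univ.filter fun i => ¬ PB i ∧ PA i) := by ext i; simp [and_comm]
    rw [e1, e2, cBA] at hsplit
    omega
  -- build ρ
  obtain ⟨ρ, hρ⟩ := perm_glue PB S PA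
    (by rw [Fintype.card_subtype, Fintype.card_subtype, cBS, cBA])
    (by rw [Fintype.card_subtype, Fintype.card_subtype, cBS', cBA'])
  set τ : Equiv.Perm (Fin K) := σ * ρ⁻¹ with hτdef
  have hτ : ∀ x, PA (τ x) ↔ PA x := by
    intro x
    have h2 := (hρ (ρ⁻¹ x)).2
    rw [Equiv.Perm.coe_inv, Equiv.apply_symm_apply] at h2
    simpa [hτdef, Equiv.Perm.mul_apply, hS] using h2.symm
  obtain ⟨σ₁, σ₂, h1, h2, hτ12⟩ := perm_decomp PA τ hτ
  obtain ⟨σ₃, σ₄, h3, h4, hρ34⟩ := perm_decomp PB ρ (fun x => (hρ x).1)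
  refine ⟨σ₁, σ₂, σ₃, σ₄, h1, h2, h3, h4, ?_⟩
  have : σ = τ * ρ := by rw [hτdef, inv_mul_cancel_right]
  rw [this, hτ12, hρ34, ← mul_assoc]
end

section
/- Let b̃ ∈ L(S_±^p Z^{⊗p}; S_±^q Z^{⊗q}) and define the Wick operator b̃^{Wick} on the finite-particle subspace by b̃^{Wick}|_{S_±^{n+p}Z^{⊗(n+p)}} = ε^{(p+q)/2}·(√((n+p)!(n+q)!)/n!)·S_±^{n+q}(b̃⊗Id^{⊗n})S_±^{n+p,*}. Then (b̃^{Wick})* = (b̃*)^{Wick}, and if p = q then b̃ ≥ 0 if and only if b̃^{Wick} ≥ 0. -/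
open scoped InnerProductSpace BigOperators

noncomputable section

/-- The sign `s_±(σ)`: `1` in the bosonic case, the signature in the fermionic case. -/
def permSign (fermionic : Bool) {n : ℕ} (σ : Equiv.Perm (Fin n)) : ℂ :=
  if fermionic then ((Equiv.Perm.sign σ : ℤ) : ℂ) else 1

/-- An abstract bosonic (`fermionic = false`) or fermionic (`fermionic = true`) Fock space
over a one-particle Hilbert space `Z`: the completed Hilbert tensor powers `TP n = Z^{⊗n}`
with their elementary tensors and permutation actions, the operators `b ⊗ Id^{⊗n}`, and
the full Fock space `Γ_±(Z)` together with the (anti)symmetrized embeddings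
`J n = S_±ⁿ : Z^{⊗n} → Γ_±(Z)` with mutually orthogonal ranges spanning a dense subspace. -/
structure FockFramework (fermionic : Bool) (Z : Type) [NormedAddCommGroup Z]
    [InnerProductSpace ℂ Z] [CompleteSpace Z] where
  /-- the completed `n`-fold Hilbert tensor power `Z^{⊗n}` -/
  TP : ℕ → Type
  [instTPGroup : ∀ n, NormedAddCommGroup (TP n)]
  [instTPInner : ∀ n, InnerProductSpace ℂ (TP n)]
  [instTPComplete : ∀ n, CompleteSpace (TP n)]
  /-- the elementary tensors `f₁ ⊗ ⋯ ⊗ f_n` -/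
  tvec : ∀ n, (Fin n → Z) → TP n
  tvec_inner : ∀ (n) (f g : Fin n → Z),
    ⟪tvec n f, tvec n g⟫_ℂ = ∏ i, ⟪f i, g i⟫_ℂ
  tvec_add : ∀ (n) (f : Fin n → Z) (i : Fin n) (y z : Z),
    tvec n (Function.update f i (y + z))
      = tvec n (Function.update f i y) + tvec n (Function.update f i z)
  tvec_smul : ∀ (n) (f : Fin n → Z) (i : Fin n) (c : ℂ) (y : Z),
    tvec n (Function.update f i (c • y)) = c • tvec n (Function.update f i y)
  tvec_dense : ∀ n, Dense (↑(Submodule.span ℂ (Set.range (tvec n))) : Set (TP n))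
  /-- the permutation action on `Z^{⊗n}` -/
  permAct : ∀ n, Equiv.Perm (Fin n) → (TP n →L[ℂ] TP n)
  permAct_tvec : ∀ (n) (σ : Equiv.Perm (Fin n)) (f : Fin n → Z),
    permAct n σ (tvec n f) = tvec n (f ∘ σ)
  /-- the operator `b ⊗ Id^{⊗n} : Z^{⊗(p+n)} → Z^{⊗(q+n)}` for `b : Z^{⊗p} → Z^{⊗q}` -/
  opTensorId : ∀ (p q n : ℕ), (TP p →L[ℂ] TP q) → (TP (p + n) →L[ℂ] TP (q + n))
  opTensorId_apply : ∀ (p q n : ℕ) (b : TP p →L[ℂ] TP q)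
      (f : Fin (q + n) → Z) (g : Fin (p + n) → Z),
    ⟪tvec (q + n) f, opTensorId p q n b (tvec (p + n) g)⟫_ℂ =
      ⟪tvec q (fun i => f (Fin.castAdd n i)), b (tvec p (fun i => g (Fin.castAdd n i)))⟫_ℂ *
        ∏ j : Fin n, ⟪f (Fin.natAdd q j), g (Fin.natAdd p j)⟫_ℂ
  /-- the full Fock space `Γ_±(Z)` -/
  Fock : Type
  [instFockGroup : NormedAddCommGroup Fock]
  [instFockInner : InnerProductSpace ℂ Fock]
  [instFockComplete : CompleteSpace Fock]
  /-- `J n x` is the `n`-particle vector `S_±ⁿ x` inside the Fock space -/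
  J : ∀ n, TP n →L[ℂ] Fock
  J_inner : ∀ (n) (x y : TP n),
    ⟪J n x, J n y⟫_ℂ =
      ⟪(n.factorial : ℂ)⁻¹ • ∑ σ : Equiv.Perm (Fin n), permSign fermionic σ • permAct n σ x,
       (n.factorial : ℂ)⁻¹ • ∑ σ : Equiv.Perm (Fin n), permSign fermionic σ • permAct n σ y⟫_ℂ
  J_orth : ∀ (m n : ℕ), m ≠ n → ∀ (x : TP m) (y : TP n), ⟪J m x, J n y⟫_ℂ = 0
  J_dense : Dense (↑(Submodule.span ℂ (⋃ n, Set.range (J n))) : Set Fock)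

attribute [instance] FockFramework.instTPGroup FockFramework.instTPInner
  FockFramework.instTPComplete FockFramework.instFockGroup FockFramework.instFockInner
  FockFramework.instFockComplete

variable {Z : Type} [NormedAddCommGroup Z] [InnerProductSpace ℂ Z] [CompleteSpace Z]
  {fermionic : Bool}

/-- The (anti)symmetrization projection `S_±ⁿ = (1/n!) Σ_σ s_±(σ) σ·` on `Z^{⊗n}`. -/
def FockFramework.symProj (F : FockFramework fermionic Z) (n : ℕ) : F.TP n →L[ℂ] F.TP n :=
  (n.factorial : ℂ)⁻¹ • ∑ σ : Equiv.Perm (Fin n), permSign fermionic σ • F.permAct n σ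

/-- `W` is the `ε`-dependent Wick quantization `b^{Wick}` of
`b ∈ L(S_±^p Z^{⊗p}; S_±^q Z^{⊗q})`, i.e. on the `(n+p)`-particle sector
`b^{Wick} = ε^{(p+q)/2} (√((n+p)!(n+q)!)/n!) S_±^{n+q} (b ⊗ Id^{⊗n}) S_±^{n+p,*}`,
and `W` vanishes on the sectors with fewer than `p` particles. -/
def IsWickOp (F : FockFramework fermionic Z) (ε : ℝ) (p q : ℕ)
    (b : F.TP p →L[ℂ] F.TP q) (W : F.Fock →L[ℂ] F.Fock) : Prop :=
  (∀ (n : ℕ) (x : F.TP (p + n)),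
      W (F.J (p + n) x) =
        ((ε ^ (((p + q : ℕ) : ℝ) / 2) *
            (Real.sqrt (((p + n).factorial * (q + n).factorial : ℕ)) / n.factorial) : ℝ) : ℂ) •
          F.J (q + n) (F.opTensorId p q n b (F.symProj (p + n) x))) ∧
  (∀ m : ℕ, m < p → ∀ x : F.TP m, W (F.J m x) = 0)

/-- `T` is trace class with trace `t`:  for some Hilbert basis the norms `‖T e_i‖` are
summable, and for every Hilbert basis the diagonal matrix elements sum to `t`. -/
def HasTraceVal {H : Type} [NormedAddCommGroup H] [InnerProductSpace ℂ H]
    (T : H →L[ℂ] H) (t : ℂ) : Prop :=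
  (∃ (ι : Type) (bas : HilbertBasis ι ℂ H), Summable fun i => ‖T (bas i)‖) ∧
  (∀ (ι : Type) (bas : HilbertBasis ι ℂ H), HasSum (fun i => ⟪bas i, T (bas i)⟫_ℂ) t)

section AuxGeneral

variable {H K : Type*} [NormedAddCommGroup H] [InnerProductSpace ℂ H]
  [NormedAddCommGroup K] [InnerProductSpace ℂ K]

lemma clm_ext_dense (A B : H →L[ℂ] K) {s : Set H}
    (hs : Dense (↑(Submodule.span ℂ s) : Set H)) (h : ∀ x ∈ s, A x = B x) : A = B := by
  ext x
  have hsub : (↑(Submodule.span ℂ s) : Set H) ⊆ {x | A x = B x} := by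
    intro x hx
    refine Submodule.span_induction (fun y hy => h y hy) (by simp) ?_ ?_ hx
    · intro a b _ _ ha hb
      simp only [Set.mem_setOf_eq] at ha hb ⊢
      simp [ha, hb]
    · intro c a _ ha
      simp only [Set.mem_setOf_eq] at ha ⊢
      simp [ha]
  have hcl : closure (↑(Submodule.span ℂ s) : Set H) ⊆ {x | A x = B x} :=
    closure_minimal hsub (isClosed_eq A.continuous B.continuous)
  exact hcl (by rw [hs.closure_eq]; trivial)

lemma clm_ext_inner_dense (A B : H →L[ℂ] K) {s : Set H} {t : Set K}
    (hs : Dense (↑(Submodule.span ℂ s) : Set H)) (ht : Dense (↑(Submodule.span ℂ t) : Set K))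
    (h : ∀ x ∈ s, ∀ y ∈ t, ⟪A x, y⟫_ℂ = ⟪B x, y⟫_ℂ) : A = B := by
  refine clm_ext_dense A B hs fun x hx => ?_
  refine ext_inner_right ℂ fun y => ?_
  have hsub : (↑(Submodule.span ℂ t) : Set K) ⊆ {y | ⟪A x, y⟫_ℂ = ⟪B x, y⟫_ℂ} := by
    intro y hy
    refine Submodule.span_induction (fun z hz => h x hx z hz) (by simp) ?_ ?_ hy
    · intro a b _ _ ha hb
      simp only [Set.mem_setOf_eq] at ha hb ⊢
      simp [inner_add_right, ha, hb]
    · intro c a _ ha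
      simp only [Set.mem_setOf_eq] at ha ⊢
      simp [inner_smul_right, ha]
  have hcl : closure (↑(Submodule.span ℂ t) : Set K) ⊆ {y | ⟪A x, y⟫_ℂ = ⟪B x, y⟫_ℂ} :=
    closure_minimal hsub
      (isClosed_eq (continuous_const.inner continuous_id) (continuous_const.inner continuous_id))
  exact hcl (by rw [ht.closure_eq]; trivial)

lemma permSign_mul (b : Bool) {n : ℕ} (σ τ : Equiv.Perm (Fin n)) :
    permSign b (σ * τ) = permSign b σ * permSign b τ := by
  cases b <;> simp [permSign]

lemma permSign_inv (b : Bool) {n : ℕ} (σ : Equiv.Perm (Fin n)) :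
    permSign b σ⁻¹ = permSign b σ := by
  cases b <;> simp [permSign]

lemma permSign_sq (b : Bool) {n : ℕ} (σ : Equiv.Perm (Fin n)) :
    permSign b σ * permSign b σ = 1 := by
  cases b
  · simp [permSign]
  · simp only [permSign, if_true]
    rcases Int.units_eq_one_or (Equiv.Perm.sign σ) with h | h <;> rw [h] <;> norm_num

lemma permSign_conj (b : Bool) {n : ℕ} (σ : Equiv.Perm (Fin n)) :
    (starRingEnd ℂ) (permSign b σ) = permSign b σ := by
  cases b
  · simp [permSign]
  · simp only [permSign, if_true]
    rcases Int.units_eq_one_or (Equiv.Perm.sign σ) with h | h <;> rw [h] <;> norm_num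

end AuxGeneral

namespace FockFramework

variable {Z : Type} [NormedAddCommGroup Z] [InnerProductSpace ℂ Z] [CompleteSpace Z]
  {fermionic : Bool} (F : FockFramework fermionic Z)

lemma permAct_mul (n : ℕ) (σ τ : Equiv.Perm (Fin n)) (x : F.TP n) :
    F.permAct n σ (F.permAct n τ x) = F.permAct n (τ * σ) x := by
  have h : (F.permAct n σ).comp (F.permAct n τ) = F.permAct n (τ * σ) := by
    refine clm_ext_dense _ _ (F.tvec_dense n) ?_
    rintro x ⟨f, rfl⟩
    simp only [ContinuousLinearMap.comp_apply, F.permAct_tvec]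
    rfl
  exact congrArg (fun (T : F.TP n →L[ℂ] F.TP n) => T x) h

lemma adjoint_permAct (n : ℕ) (σ : Equiv.Perm (Fin n)) :
    ContinuousLinearMap.adjoint (F.permAct n σ) = F.permAct n σ⁻¹ := by
  refine clm_ext_inner_dense _ _ (F.tvec_dense n) (F.tvec_dense n) ?_
  rintro x ⟨f, rfl⟩ y ⟨g, rfl⟩
  rw [ContinuousLinearMap.adjoint_inner_left, F.permAct_tvec, F.permAct_tvec,
    F.tvec_inner, F.tvec_inner]
  simp only [Function.comp_apply]
  rw [← Equiv.prod_comp σ (fun i => (⟪f (σ⁻¹ i), g i⟫_ℂ : ℂ))]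
  simp [Function.comp]

lemma inner_permAct_left (n : ℕ) (σ : Equiv.Perm (Fin n)) (x y : F.TP n) :
    ⟪F.permAct n σ x, y⟫_ℂ = ⟪x, F.permAct n σ⁻¹ y⟫_ℂ := by
  rw [← F.adjoint_permAct n σ, ContinuousLinearMap.adjoint_inner_right]

lemma symProj_apply (n : ℕ) (x : F.TP n) :
    F.symProj n x
      = (n.factorial : ℂ)⁻¹ • ∑ σ : Equiv.Perm (Fin n), permSign fermionic σ • F.permAct n σ x := by
  simp [FockFramework.symProj, ContinuousLinearMap.smul_apply, ContinuousLinearMap.sum_apply]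

lemma inner_symProj_left (n : ℕ) (x y : F.TP n) :
    ⟪F.symProj n x, y⟫_ℂ = ⟪x, F.symProj n y⟫_ℂ := by
  rw [F.symProj_apply, F.symProj_apply, inner_smul_left, inner_smul_right, sum_inner, inner_sum]
  congr 1
  · simp
  rw [← Equiv.sum_comp (Equiv.inv (Equiv.Perm (Fin n)))
      (fun σ => (⟪x, permSign fermionic σ • F.permAct n σ y⟫_ℂ : ℂ))]
  refine Finset.sum_congr rfl fun σ _ => ?_
  simp only [Equiv.inv_apply]
  rw [inner_smul_left, inner_smul_right, permSign_conj, permSign_inv, F.inner_permAct_left]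

lemma permAct_symProj (n : ℕ) (σ : Equiv.Perm (Fin n)) (x : F.TP n) :
    F.permAct n σ (F.symProj n x) = permSign fermionic σ • F.symProj n x := by
  rw [F.symProj_apply, map_smul, map_sum]
  simp_rw [map_smul, F.permAct_mul]
  have h : ∑ τ : Equiv.Perm (Fin n), permSign fermionic τ • F.permAct n (τ * σ) x
      = permSign fermionic σ • ∑ τ : Equiv.Perm (Fin n), permSign fermionic τ • F.permAct n τ x := by
    rw [Finset.smul_sum]
    rw [← Equiv.sum_comp (Equiv.mulRight σ)
      (fun ρ => permSign fermionic σ • (permSign fermionic ρ • F.permAct n ρ x))]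
    refine Finset.sum_congr rfl fun τ _ => ?_
    simp only [Equiv.coe_mulRight]
    rw [permSign_mul, smul_smul]
    congr 1
    linear_combination (-(permSign fermionic τ)) * permSign_sq fermionic σ
  rw [h, smul_comm]
lemma symProj_idem (n : ℕ) (x : F.TP n) : F.symProj n (F.symProj n x) = F.symProj n x := by
  conv_lhs => rw [F.symProj_apply]
  simp_rw [F.permAct_symProj, smul_smul, permSign_sq, one_smul]
  rw [Finset.sum_const, Finset.card_univ, Fintype.card_perm, Fintype.card_fin,
    ← Nat.cast_smul_eq_nsmul ℂ, smul_smul,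
    inv_mul_cancel₀ (Nat.cast_ne_zero.mpr (Nat.factorial_ne_zero n)), one_smul]

lemma inner_symProj_symProj (n : ℕ) (x y : F.TP n) :
    ⟪F.symProj n x, F.symProj n y⟫_ℂ = ⟪x, F.symProj n y⟫_ℂ := by
  rw [F.inner_symProj_left, F.symProj_idem]

lemma J_inner' (n : ℕ) (x y : F.TP n) :
    ⟪F.J n x, F.J n y⟫_ℂ = ⟪x, F.symProj n y⟫_ℂ := by
  rw [F.J_inner, ← F.symProj_apply, ← F.symProj_apply, F.inner_symProj_symProj]

lemma adjoint_opTensorId (p q n : ℕ) (b : F.TP p →L[ℂ] F.TP q) :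
    ContinuousLinearMap.adjoint (F.opTensorId p q n b)
      = F.opTensorId q p n (ContinuousLinearMap.adjoint b) := by
  refine clm_ext_inner_dense _ _ (F.tvec_dense (q + n)) (F.tvec_dense (p + n)) ?_
  rintro x ⟨f, rfl⟩ y ⟨g, rfl⟩
  rw [ContinuousLinearMap.adjoint_inner_left, F.opTensorId_apply]
  conv_rhs => rw [← inner_conj_symm, F.opTensorId_apply]
  rw [map_mul, map_prod]
  congr 1
  · rw [inner_conj_symm, ContinuousLinearMap.adjoint_inner_left]
  · refine Finset.prod_congr rfl fun j _ => ?_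
    rw [inner_conj_symm]

lemma opTensorId_zero (p : ℕ) (b : F.TP p →L[ℂ] F.TP p) : F.opTensorId p p 0 b = b := by
  refine clm_ext_inner_dense _ _ (F.tvec_dense (p + 0)) (F.tvec_dense (p + 0)) ?_
  rintro x ⟨f, rfl⟩ y ⟨g, rfl⟩
  conv_lhs => rw [← inner_conj_symm, F.opTensorId_apply]
  have hf : (fun i : Fin p => f (Fin.castAdd 0 i)) = f := funext fun i => congrArg f (Fin.ext rfl)
  have hg : (fun i : Fin p => g (Fin.castAdd 0 i)) = g := funext fun i => congrArg g (Fin.ext rfl)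
  rw [hf, hg]
  simp only [Finset.univ_eq_empty, Finset.prod_empty, mul_one]
  rw [inner_conj_symm]
  rfl

end FockFramework

section Schur

open scoped ComplexOrder MatrixOrder

variable {H K : Type*} [NormedAddCommGroup H] [InnerProductSpace ℂ H] [CompleteSpace H]
  [NormedAddCommGroup K] [InnerProductSpace ℂ K]

lemma schur_aux {b : H →L[ℂ] H} (hb : b.IsPositive) {N : ℕ}
    (c : Fin N → ℂ) (u : Fin N → H) (t : Fin N → K) :
    0 ≤ (∑ k, ∑ l, (starRingEnd ℂ) (c k) * c l * (⟪u k, b (u l)⟫_ℂ * ⟪t k, t l⟫_ℂ)).re := by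
  classical
  have hsa : ∀ x y : H, ⟪b x, y⟫_ℂ = ⟪x, b y⟫_ℂ := by
    intro x y
    conv_lhs => rw [← ContinuousLinearMap.isSelfAdjoint_iff'.mp hb.isSelfAdjoint]
    exact ContinuousLinearMap.adjoint_inner_left b y x
  set M : Matrix (Fin N) (Fin N) ℂ := Matrix.of fun k l => ⟪u k, b (u l)⟫_ℂ with hM
  have hMps : M.PosSemidef := by
    refine Matrix.PosSemidef.of_dotProduct_mulVec_nonneg ?_ ?_
    · ext k l
      simp only [Matrix.conjTranspose_apply, hM, Matrix.of_apply, RCLike.star_def]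
      rw [inner_conj_symm, hsa]
    · intro x
      have hx : dotProduct (star x) (M.mulVec x)
          = ⟪∑ k, x k • u k, b (∑ l, x l • u l)⟫_ℂ := by
        simp only [dotProduct, Matrix.mulVec, Pi.star_apply, hM, Matrix.of_apply,
          map_sum, map_smul, inner_sum, sum_inner, inner_smul_left, inner_smul_right,
          Finset.mul_sum, RCLike.star_def]
        rw [Finset.sum_comm]
        refine Finset.sum_congr rfl fun k _ => Finset.sum_congr rfl fun l _ => by ring
      rw [hx]
      have him : (starRingEnd ℂ) (⟪∑ k, x k • u k, b (∑ l, x l • u l)⟫_ℂ)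
          = ⟪∑ k, x k • u k, b (∑ l, x l • u l)⟫_ℂ := by
        rw [inner_conj_symm, hsa]
      have hre : 0 ≤ (⟪∑ k, x k • u k, b (∑ l, x l • u l)⟫_ℂ).re :=
        hb.re_inner_nonneg_right _
      rw [Complex.le_def]
      exact ⟨by simpa using hre, by simpa using (Complex.conj_eq_iff_im.mp him).symm⟩
  obtain ⟨B, hB⟩ : ∃ B : Matrix (Fin N) (Fin N) ℂ, M = Matrix.conjTranspose B * B :=
    CStarAlgebra.nonneg_iff_eq_star_mul_self.mp hMps.nonneg
  have hMentry : ∀ k l, ⟪u k, b (u l)⟫_ℂ = ∑ m, (starRingEnd ℂ) (B m k) * B m l := by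
    intro k l
    have h1 : M k l = (Matrix.conjTranspose B * B) k l := by rw [← hB]
    simpa [hM, Matrix.mul_apply, Matrix.conjTranspose_apply, RCLike.star_def] using h1
  have key : (∑ k, ∑ l, (starRingEnd ℂ) (c k) * c l * (⟪u k, b (u l)⟫_ℂ * ⟪t k, t l⟫_ℂ))
      = ∑ m, ⟪∑ k, (B m k * c k) • t k, ∑ l, (B m l * c l) • t l⟫_ℂ := by
    have h1 : ∀ k l, (starRingEnd ℂ) (c k) * c l * (⟪u k, b (u l)⟫_ℂ * ⟪t k, t l⟫_ℂ)
        = ∑ m, (starRingEnd ℂ) (B m k * c k) * ((B m l * c l) * ⟪t k, t l⟫_ℂ) := by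
      intro k l
      rw [hMentry k l, Finset.sum_mul, Finset.mul_sum]
      refine Finset.sum_congr rfl fun m _ => ?_
      simp only [map_mul]
      ring
    calc (∑ k, ∑ l, (starRingEnd ℂ) (c k) * c l * (⟪u k, b (u l)⟫_ℂ * ⟪t k, t l⟫_ℂ))
        = ∑ k, ∑ l, ∑ m, (starRingEnd ℂ) (B m k * c k) * ((B m l * c l) * ⟪t k, t l⟫_ℂ) := by
          exact Finset.sum_congr rfl fun k _ => Finset.sum_congr rfl fun l _ => h1 k l
      _ = ∑ k, ∑ m, ∑ l, (starRingEnd ℂ) (B m k * c k) * ((B m l * c l) * ⟪t k, t l⟫_ℂ) :=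
          Finset.sum_congr rfl fun k _ => by rw [Finset.sum_comm]
      _ = ∑ m, ∑ k, ∑ l, (starRingEnd ℂ) (B m k * c k) * ((B m l * c l) * ⟪t k, t l⟫_ℂ) := by
          rw [Finset.sum_comm]
      _ = ∑ m, ⟪∑ k, (B m k * c k) • t k, ∑ l, (B m l * c l) • t l⟫_ℂ := by
          refine Finset.sum_congr rfl fun m _ => ?_
          rw [sum_inner]
          refine (Finset.sum_congr rfl fun k _ => ?_).symm
          rw [inner_smul_left, inner_sum, Finset.mul_sum]
          refine Finset.sum_congr rfl fun l _ => ?_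
          rw [inner_smul_right]
  rw [key, Complex.re_sum]
  refine Finset.sum_nonneg fun m _ => ?_
  simpa using (inner_self_nonneg (𝕜 := ℂ) (x := ∑ k, (B m k * c k) • t k))

end Schur

namespace FockFramework

variable {Z : Type} [NormedAddCommGroup Z] [InnerProductSpace ℂ Z] [CompleteSpace Z]
  {fermionic : Bool} (F : FockFramework fermionic Z)

lemma opT_inner_nonneg (p n : ℕ) {b : F.TP p →L[ℂ] F.TP p} (hb : b.IsPositive)
    (w : F.TP (p + n)) : 0 ≤ (⟪w, F.opTensorId p p n b w⟫_ℂ).re := by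
  classical
  have hclosed : IsClosed {w : F.TP (p + n) | 0 ≤ (⟪w, F.opTensorId p p n b w⟫_ℂ).re} := by
    refine isClosed_le continuous_const ?_
    exact Complex.continuous_re.comp (continuous_id.inner (F.opTensorId p p n b).continuous)
  have hspan : (↑(Submodule.span ℂ (Set.range (F.tvec (p + n)))) : Set (F.TP (p + n)))
      ⊆ {w : F.TP (p + n) | 0 ≤ (⟪w, F.opTensorId p p n b w⟫_ℂ).re} := by
    intro w hw
    obtain ⟨N, c, g, hsum⟩ := Submodule.mem_span_set'.mp hw
    choose h hh using fun i => (g i).2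
    have hw' : w = ∑ i, c i • F.tvec (p + n) (h i) := by
      rw [← hsum]
      exact Finset.sum_congr rfl fun i _ => by rw [hh i]
    have hexp : ⟪w, F.opTensorId p p n b w⟫_ℂ
        = ∑ k, ∑ l, (starRingEnd ℂ) (c k) * c l *
            (⟪F.tvec p (fun i => h k (Fin.castAdd n i)),
                b (F.tvec p (fun i => h l (Fin.castAdd n i)))⟫_ℂ *
              ⟪F.tvec n (fun j => h k (Fin.natAdd p j)),
                F.tvec n (fun j => h l (Fin.natAdd p j))⟫_ℂ) := by
      rw [hw', map_sum, sum_inner]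
      refine Finset.sum_congr rfl fun k _ => ?_
      rw [inner_smul_left, inner_sum, Finset.mul_sum]
      refine Finset.sum_congr rfl fun l _ => ?_
      rw [map_smul, inner_smul_right, F.opTensorId_apply, F.tvec_inner]
      ring
    rw [Set.mem_setOf_eq, hexp]
    exact schur_aux hb c _ _
  have hcl := closure_minimal hspan hclosed
  rw [(F.tvec_dense (p + n)).closure_eq] at hcl
  exact hcl trivial

lemma exists_decomp {u : F.Fock} (hu : u ∈ Submodule.span ℂ (⋃ n, Set.range (F.J n))) :
    ∃ (s : Finset ℕ) (v : ∀ n, F.TP n), u = ∑ n ∈ s, F.J n (v n) := by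
  classical
  refine Submodule.span_induction ?_ ?_ ?_ ?_ hu
  · rintro x hx
    simp only [Set.mem_iUnion, Set.mem_range] at hx
    obtain ⟨n, y, rfl⟩ := hx
    refine ⟨{n}, fun m => if h : n = m then h ▸ y else 0, ?_⟩
    simp
  · exact ⟨∅, fun _ => 0, by simp⟩
  · rintro x y _ _ ⟨s, v, rfl⟩ ⟨s', v', rfl⟩
    refine ⟨s ∪ s', fun n => (if n ∈ s then v n else 0) + (if n ∈ s' then v' n else 0), ?_⟩
    have hterm : ∀ n, F.J n ((if n ∈ s then v n else 0) + (if n ∈ s' then v' n else 0))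
        = (if n ∈ s then F.J n (v n) else 0) + (if n ∈ s' then F.J n (v' n) else 0) := by
      intro n
      rw [map_add]
      congr 1 <;> split <;> simp
    rw [Finset.sum_congr rfl fun n _ => hterm n, Finset.sum_add_distrib,
      Finset.sum_ite_mem, Finset.sum_ite_mem, Finset.union_inter_cancel_left,
      Finset.union_inter_cancel_right]
  · rintro a x _ ⟨s, v, rfl⟩
    refine ⟨s, fun n => a • v n, ?_⟩
    rw [Finset.smul_sum]
    exact Finset.sum_congr rfl fun n _ => (map_smul (F.J n) a (v n)).symm

end FockFramework

section Wick

variable {Z : Type} [NormedAddCommGroup Z] [InnerProductSpace ℂ Z] [CompleteSpace Z]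
  {fermionic : Bool}

lemma wickC_pos {ε : ℝ} (hε : 0 < ε) (p q n : ℕ) :
    0 < ε ^ (((p + q : ℕ) : ℝ) / 2) *
      (Real.sqrt (((p + n).factorial * (q + n).factorial : ℕ)) / n.factorial) := by
  refine mul_pos (Real.rpow_pos_of_pos hε _) (div_pos (Real.sqrt_pos.mpr ?_) ?_)
  · exact_mod_cast Nat.mul_pos (Nat.factorial_pos _) (Nat.factorial_pos _)
  · exact_mod_cast Nat.factorial_pos n

lemma wick_adjoint {F : FockFramework fermionic Z} {ε : ℝ} {p q : ℕ}
    {b : F.TP p →L[ℂ] F.TP q} {W W' : F.Fock →L[ℂ] F.Fock}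
    (hW : IsWickOp F ε p q b W)
    (hW' : IsWickOp F ε q p (ContinuousLinearMap.adjoint b) W') :
    ContinuousLinearMap.adjoint W = W' := by
  refine clm_ext_inner_dense _ _ F.J_dense F.J_dense ?_
  intro u hu v hv
  simp only [Set.mem_iUnion, Set.mem_range] at hu hv
  obtain ⟨m, y, rfl⟩ := hu
  obtain ⟨k, x, rfl⟩ := hv
  rw [ContinuousLinearMap.adjoint_inner_left]
  rcases lt_or_ge k p with hk | hk
  · rw [hW.2 k hk x, inner_zero_right]
    rcases lt_or_ge m q with hm | hm
    · rw [hW'.2 m hm y, inner_zero_left]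
    · obtain ⟨n, rfl⟩ := Nat.exists_eq_add_of_le hm
      rw [hW'.1 n y, inner_smul_left, F.J_orth (p + n) k (by omega), mul_zero]
  · obtain ⟨n, rfl⟩ := Nat.exists_eq_add_of_le hk
    rcases lt_or_ge m q with hm | hm
    · rw [hW'.2 m hm y, inner_zero_left, hW.1 n x, inner_smul_right,
        F.J_orth m (q + n) (by omega), mul_zero]
    · obtain ⟨n', rfl⟩ := Nat.exists_eq_add_of_le hm
      rcases eq_or_ne n' n with rfl | hne
      · rw [hW.1 n' x, hW'.1 n' y, inner_smul_right, inner_smul_left, Complex.conj_ofReal,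
          F.J_inner', F.J_inner']
        have hC : (ε ^ (((q + p : ℕ) : ℝ) / 2) *
              (Real.sqrt (((q + n').factorial * (p + n').factorial : ℕ)) / n'.factorial) : ℝ)
            = (ε ^ (((p + q : ℕ) : ℝ) / 2) *
              (Real.sqrt (((p + n').factorial * (q + n').factorial : ℕ)) / n'.factorial) : ℝ) := by
          rw [Nat.add_comm q p, Nat.mul_comm ((q + n').factorial) ((p + n').factorial)]
        rw [hC]
        congr 1
        rw [← F.inner_symProj_left, ← F.adjoint_opTensorId,
          ContinuousLinearMap.adjoint_inner_left]
      · rw [hW.1 n x, inner_smul_right, F.J_orth (q + n') (q + n) (by omega), mul_zero,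
          hW'.1 n' y, inner_smul_left, F.J_orth (p + n') (p + n) (by omega), mul_zero]

lemma wick_pos_of_pos {F : FockFramework fermionic Z} {ε : ℝ} (hε : 0 < ε) {p : ℕ}
    {b₂ : F.TP p →L[ℂ] F.TP p} {W₂ : F.Fock →L[ℂ] F.Fock}
    (hW₂ : IsWickOp F ε p p b₂ W₂) (hb : b₂.IsPositive) : W₂.IsPositive := by
  classical
  have hW₂' : IsWickOp F ε p p (ContinuousLinearMap.adjoint b₂) W₂ := by
    rw [ContinuousLinearMap.isSelfAdjoint_iff'.mp hb.isSelfAdjoint]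
    exact hW₂
  have hsa : ContinuousLinearMap.adjoint W₂ = W₂ := wick_adjoint hW₂ hW₂'
  refine ⟨ContinuousLinearMap.isSelfAdjoint_iff_isSymmetric.mp
    (ContinuousLinearMap.isSelfAdjoint_iff'.mpr hsa), fun u => ?_⟩
  rw [ContinuousLinearMap.reApplyInnerSelf_apply, RCLike.re_to_complex]
  -- density argument
  have hclosed : IsClosed {u : F.Fock | 0 ≤ (⟪W₂ u, u⟫_ℂ).re} := by
    refine isClosed_le continuous_const ?_
    exact Complex.continuous_re.comp (W₂.continuous.inner continuous_id)
  have hdiag : ∀ (n : ℕ) (x : F.TP n), 0 ≤ (⟪W₂ (F.J n x), F.J n x⟫_ℂ).re := by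
    intro n x
    rw [← inner_conj_symm, Complex.conj_re]
    rcases lt_or_ge n p with hn | hn
    · rw [hW₂.2 n hn x, inner_zero_right]
      simp
    · obtain ⟨k, rfl⟩ := Nat.exists_eq_add_of_le hn
      rw [hW₂.1 k x, inner_smul_right, F.J_inner', ← F.inner_symProj_left,
        Complex.re_ofReal_mul]
      exact mul_nonneg (wickC_pos hε p p k).le
        (F.opT_inner_nonneg p k hb (F.symProj (p + k) x))
  have hoff : ∀ (n m : ℕ), n ≠ m → ∀ (x : F.TP n) (y : F.TP m),
      ⟪W₂ (F.J n x), F.J m y⟫_ℂ = 0 := by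
    intro n m hnm x y
    rcases lt_or_ge n p with hn | hn
    · rw [hW₂.2 n hn x, inner_zero_left]
    · obtain ⟨k, rfl⟩ := Nat.exists_eq_add_of_le hn
      rw [hW₂.1 k x, inner_smul_left, F.J_orth (p + k) m hnm, mul_zero]
  have hspan : (↑(Submodule.span ℂ (⋃ n, Set.range (F.J n))) : Set F.Fock)
      ⊆ {u : F.Fock | 0 ≤ (⟪W₂ u, u⟫_ℂ).re} := by
    intro u hu
    obtain ⟨s, v, rfl⟩ := F.exists_decomp hu
    rw [Set.mem_setOf_eq, map_sum, sum_inner]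
    rw [Complex.re_sum]
    refine Finset.sum_nonneg fun n hn => ?_
    rw [inner_sum, Finset.sum_eq_single_of_mem n hn (fun m _ hm => hoff n m (Ne.symm hm) _ _)]
    exact hdiag n (v n)
  have hcl := closure_minimal hspan hclosed
  rw [F.J_dense.closure_eq] at hcl
  exact hcl trivial

lemma pos_of_wick_pos {F : FockFramework fermionic Z} {ε : ℝ} (hε : 0 < ε) {p : ℕ}
    {b₂ : F.TP p →L[ℂ] F.TP p} {W₂ : F.Fock →L[ℂ] F.Fock}
    (hW₂ : IsWickOp F ε p p b₂ W₂)
    (hb₂ : b₂ = (F.symProj p).comp (b₂.comp (F.symProj p)))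
    (hpos : W₂.IsPositive) : b₂.IsPositive := by
  have hP0 : F.symProj (p + 0) = F.symProj p := rfl
  have hopT : F.opTensorId p p 0 b₂ = b₂ := F.opTensorId_zero p b₂
  set Cr : ℝ := ε ^ (((p + p : ℕ) : ℝ) / 2) *
    (Real.sqrt (((p + 0).factorial * (p + 0).factorial : ℕ)) / (0 : ℕ).factorial) with hCr
  have hCpos : 0 < Cr := wickC_pos hε p p 0
  have hb₂' : ∀ z : F.TP (p + 0),
      F.symProj (p + 0) (b₂ (F.symProj (p + 0) z)) = b₂ z := by
    intro z
    calc F.symProj (p + 0) (b₂ (F.symProj (p + 0) z))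
        = ((F.symProj p).comp (b₂.comp (F.symProj p))) z := rfl
      _ = b₂ z := by rw [← hb₂]
  have key : ∀ x y : F.TP (p + 0),
      ⟪F.J (p + 0) x, W₂ (F.J (p + 0) y)⟫_ℂ = (Cr : ℂ) * ⟪x, b₂ y⟫_ℂ := by
    intro x y
    have hvec : F.symProj (p + 0) (F.opTensorId p p 0 b₂ (F.symProj (p + 0) y)) = b₂ y := by
      rw [hopT]
      exact hb₂' y
    rw [hW₂.1 0 y, inner_smul_right, F.J_inner', hvec, ← hCr]
  have hsaW : ContinuousLinearMap.adjoint W₂ = W₂ :=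
    ContinuousLinearMap.isSelfAdjoint_iff'.mp hpos.isSelfAdjoint
  have hswap : ∀ x y : F.TP (p + 0), ⟪x, b₂ y⟫_ℂ = ⟪b₂ x, y⟫_ℂ := by
    intro x y
    have h1 : (Cr : ℂ) * ⟪x, b₂ y⟫_ℂ = (Cr : ℂ) * ⟪b₂ x, y⟫_ℂ := by
      calc (Cr : ℂ) * ⟪x, b₂ y⟫_ℂ = ⟪F.J (p + 0) x, W₂ (F.J (p + 0) y)⟫_ℂ := (key x y).symm
        _ = ⟪ContinuousLinearMap.adjoint W₂ (F.J (p + 0) x), F.J (p + 0) y⟫_ℂ := by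
            rw [ContinuousLinearMap.adjoint_inner_left]
        _ = ⟪W₂ (F.J (p + 0) x), F.J (p + 0) y⟫_ℂ := by rw [hsaW]
        _ = (starRingEnd ℂ) (⟪F.J (p + 0) y, W₂ (F.J (p + 0) x)⟫_ℂ) := by
            rw [inner_conj_symm]
        _ = (starRingEnd ℂ) ((Cr : ℂ) * ⟪y, b₂ x⟫_ℂ) := by rw [key y x]
        _ = (Cr : ℂ) * ⟪b₂ x, y⟫_ℂ := by
            rw [map_mul, Complex.conj_ofReal, inner_conj_symm]
    exact mul_left_cancel₀ (by exact_mod_cast hCpos.ne') h1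
  constructor
  · refine ContinuousLinearMap.isSelfAdjoint_iff_isSymmetric.mp
      (ContinuousLinearMap.isSelfAdjoint_iff'.mpr ?_)
    ext x
    refine ext_inner_right ℂ fun y => ?_
    rw [ContinuousLinearMap.adjoint_inner_left]
    exact hswap x y
  · intro x
    have h3 : 0 ≤ (⟪W₂ (F.J (p + 0) x), F.J (p + 0) x⟫_ℂ).re := by
      have := hpos.2 (F.J (p + 0) x)
      rwa [ContinuousLinearMap.reApplyInnerSelf_apply, RCLike.re_to_complex] at this
    rw [← inner_conj_symm, Complex.conj_re, key x x, Complex.re_ofReal_mul] at h3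
    have h4 : 0 ≤ (⟪x, b₂ x⟫_ℂ).re := by nlinarith [h3, hCpos]
    have h5 : 0 ≤ (⟪b₂ x, x⟫_ℂ).re := by rwa [← inner_conj_symm, Complex.conj_re]
    rw [ContinuousLinearMap.reApplyInnerSelf_apply, RCLike.re_to_complex]
    exact h5

end Wick

/-- For `b ∈ L(S_±^p Z^{⊗p}; S_±^q Z^{⊗q})`, the Wick quantization
`b^{Wick}|_{S_±^{n+p}Z^{⊗(n+p)}} = ε^{(p+q)/2}(√((n+p)!(n+q)!)/n!) S_±^{n+q}(b⊗Id^{⊗n})S_±^{n+p,*}`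
satisfies `(b^{Wick})* = (b*)^{Wick}`; moreover, for `p = q`, `b ≥ 0` if and only if
`b^{Wick} ≥ 0`. -/
theorem wick_adjoint_and_positivity
    (F : FockFramework fermionic Z) (ε : ℝ) (hε : 0 < ε) (p q : ℕ)
    (b : F.TP p →L[ℂ] F.TP q)
    (hb : b = (F.symProj q).comp (b.comp (F.symProj p)))
    (W W' : F.Fock →L[ℂ] F.Fock)
    (hW : IsWickOp F ε p q b W)
    (hW' : IsWickOp F ε q p (ContinuousLinearMap.adjoint b) W')
    (b₂ : F.TP p →L[ℂ] F.TP p)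
    (hb₂ : b₂ = (F.symProj p).comp (b₂.comp (F.symProj p)))
    (W₂ : F.Fock →L[ℂ] F.Fock)
    (hW₂ : IsWickOp F ε p p b₂ W₂) :
    ContinuousLinearMap.adjoint W = W' ∧ (b₂.IsPositive ↔ W₂.IsPositive) := by
  refine ⟨wick_adjoint hW hW', ?_, ?_⟩
  · exact fun h => wick_pos_of_pos hε hW₂ h
  · exact fun h => pos_of_wick_pos hε hW₂ hb₂ h

end
end
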